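/- For unit vectors d₀, d with d₀·d ≠ -1 and any ψ ∈ ℝ, the identity exp(ψ d̂) χ[d₀,d] = χ[d₀,d] exp(ψ d̂₀) holds, where χ[d₀,d] is the drill-free rotation mapping d₀ to d. -/

import Mathlib

open Matrix Real

noncomputable def skewM (w : Fin 3 → ℝ) : Matrix (Fin 3) (Fin 3) ℝ :=
  !![0, -w 2, w 1; w 2, 0, -w 0; -w 1, w 0, 0]

noncomputable def chiR (d₀ d : Fin 3 → ℝ) : Matrix (Fin 3) (Fin 3) ℝ :=
  (d₀ ⬝ᵥ d) • (1 : Matrix (Fin 3) (Fin 3) ℝ) + skewM (d₀ ⨯₃ d)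
    + (1 / (1 + d₀ ⬝ᵥ d)) • vecMulVec (d₀ ⨯₃ d) (d₀ ⨯₃ d)

noncomputable def nrm (w : Fin 3 → ℝ) : ℝ := Real.sqrt (w ⬝ᵥ w)

set_option maxHeartbeats 2000000 in
lemma key (d₀ d : Fin 3 → ℝ) (h₀ : d₀ ⬝ᵥ d₀ = 1)
    (h₁ : d ⬝ᵥ d = 1) (h : d₀ ⬝ᵥ d ≠ -1) :
    skewM d * chiR d₀ d = chiR d₀ d * skewM d₀ := by
  have h₀' : d₀ 0 * d₀ 0 + d₀ 1 * d₀ 1 + d₀ 2 * d₀ 2 = 1 := by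
    simpa [dotProduct, Fin.sum_univ_three] using h₀
  have h₁' : d 0 * d 0 + d 1 * d 1 + d 2 * d 2 = 1 := by
    simpa [dotProduct, Fin.sum_univ_three] using h₁
  have hc : 1 + d₀ ⬝ᵥ d ≠ 0 := fun hh => h (by linarith)
  have hd : d₀ ⬝ᵥ d = d₀ 0 * d 0 + d₀ 1 * d 1 + d₀ 2 * d 2 := by
    simp [dotProduct, Fin.sum_univ_three]
  obtain ⟨u, hq, hu⟩ : ∃ u : ℝ, 1 / (1 + d₀ ⬝ᵥ d) = u
      ∧ u * (1 + (d₀ 0 * d 0 + d₀ 1 * d 1 + d₀ 2 * d 2)) = 1 :=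
    ⟨1 / (1 + d₀ ⬝ᵥ d), rfl, by rw [← hd]; exact one_div_mul_cancel hc⟩
  have hchi : chiR d₀ d = !![((d₀ 0 * d 0 + d₀ 1 * d 1 + d₀ 2 * d 2) + 0 + u * (d₀ 1 * d 2 - d₀ 2 * d 1) * (d₀ 1 * d 2 - d₀ 2 * d 1)), (0 + (-(d₀ 0 * d 1 - d₀ 1 * d 0)) + u * (d₀ 1 * d 2 - d₀ 2 * d 1) * (d₀ 2 * d 0 - d₀ 0 * d 2)), (0 + (d₀ 2 * d 0 - d₀ 0 * d 2) + u * (d₀ 1 * d 2 - d₀ 2 * d 1) * (d₀ 0 * d 1 - d₀ 1 * d 0)); (0 + (d₀ 0 * d 1 - d₀ 1 * d 0) + u * (d₀ 2 * d 0 - d₀ 0 * d 2) * (d₀ 1 * d 2 - d₀ 2 * d 1)), ((d₀ 0 * d 0 + d₀ 1 * d 1 + d₀ 2 * d 2) + 0 + u * (d₀ 2 * d 0 - d₀ 0 * d 2) * (d₀ 2 * d 0 - d₀ 0 * d 2)), (0 + (-(d₀ 1 * d 2 - d₀ 2 * d 1)) + u * (d₀ 2 * d 0 - d₀ 0 * d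 2) * (d₀ 0 * d 1 - d₀ 1 * d 0)); (0 + (-(d₀ 2 * d 0 - d₀ 0 * d 2)) + u * (d₀ 0 * d 1 - d₀ 1 * d 0) * (d₀ 1 * d 2 - d₀ 2 * d 1)), (0 + (d₀ 1 * d 2 - d₀ 2 * d 1) + u * (d₀ 0 * d 1 - d₀ 1 * d 0) * (d₀ 2 * d 0 - d₀ 0 * d 2)), ((d₀ 0 * d 0 + d₀ 1 * d 1 + d₀ 2 * d 2) + 0 + u * (d₀ 0 * d 1 - d₀ 1 * d 0) * (d₀ 0 * d 1 - d₀ 1 * d 0))] := by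
    rw [chiR, hq, hd, cross_apply]
    ext i j
    fin_cases i <;> fin_cases j <;>
      simp [skewM, vecMulVec_apply, Matrix.one_apply] <;> ring
  rw [hchi, skewM, skewM, Matrix.mul_fin_three, Matrix.mul_fin_three]
  ext i j
  fin_cases i <;> fin_cases j <;> simp only [Fin.zero_eta, Fin.mk_one, Fin.reduceFinMk, Matrix.cons_val_zero, Matrix.cons_val_one, Matrix.cons_val_two, Matrix.head_cons, Matrix.tail_cons, Matrix.cons_val', Matrix.empty_val', Matrix.cons_val_fin_one, Matrix.head_fin_const, Matrix.of_apply, Matrix.cons_val_zero]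
  · linear_combination (norm := ring_nf) (u * ((d₀ 0 * d 0 + d₀ 1 * d 1 + d₀ 2 * d 2) * 0 + d₀ 0 * (d₀ 1 * d 2 - d₀ 2 * d 1)) * h₁' - u * ((d₀ 0 * d 0 + d₀ 1 * d 1 + d₀ 2 * d 2) * 0 + (d₀ 1 * d 2 - d₀ 2 * d 1) * d 0) * h₀' - ((d₀ 0 * d 0 + d₀ 1 * d 1 + d₀ 2 * d 2) * (0 - 0) + (d₀ 1 * d 2 - d₀ 2 * d 1) * d 0 - d₀ 0 * (d₀ 1 * d 2 - d₀ 2 * d 1)) * hu)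
  · linear_combination (norm := ring_nf) (u * ((d₀ 0 * d 0 + d₀ 1 * d 1 + d₀ 2 * d 2) * (-d₀ 2) + d₀ 0 * (d₀ 2 * d 0 - d₀ 0 * d 2)) * h₁' - u * ((d₀ 0 * d 0 + d₀ 1 * d 1 + d₀ 2 * d 2) * (-d 2) + (d₀ 1 * d 2 - d₀ 2 * d 1) * d 1) * h₀' - ((d₀ 0 * d 0 + d₀ 1 * d 1 + d₀ 2 * d 2) * ((-d 2) - (-d₀ 2)) + (d₀ 1 * d 2 - d₀ 2 * d 1) * d 1 - d₀ 0 * (d₀ 2 * d 0 - d₀ 0 * d 2)) * hu)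
  · linear_combination (norm := ring_nf) (u * ((d₀ 0 * d 0 + d₀ 1 * d 1 + d₀ 2 * d 2) * d₀ 1 + d₀ 0 * (d₀ 0 * d 1 - d₀ 1 * d 0)) * h₁' - u * ((d₀ 0 * d 0 + d₀ 1 * d 1 + d₀ 2 * d 2) * d 1 + (d₀ 1 * d 2 - d₀ 2 * d 1) * d 2) * h₀' - ((d₀ 0 * d 0 + d₀ 1 * d 1 + d₀ 2 * d 2) * (d 1 - d₀ 1) + (d₀ 1 * d 2 - d₀ 2 * d 1) * d 2 - d₀ 0 * (d₀ 0 * d 1 - d₀ 1 * d 0)) * hu)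
  · linear_combination (norm := ring_nf) (u * ((d₀ 0 * d 0 + d₀ 1 * d 1 + d₀ 2 * d 2) * d₀ 2 + d₀ 1 * (d₀ 1 * d 2 - d₀ 2 * d 1)) * h₁' - u * ((d₀ 0 * d 0 + d₀ 1 * d 1 + d₀ 2 * d 2) * d 2 + (d₀ 2 * d 0 - d₀ 0 * d 2) * d 0) * h₀' - ((d₀ 0 * d 0 + d₀ 1 * d 1 + d₀ 2 * d 2) * (d 2 - d₀ 2) + (d₀ 2 * d 0 - d₀ 0 * d 2) * d 0 - d₀ 1 * (d₀ 1 * d 2 - d₀ 2 * d 1)) * hu)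
  · linear_combination (norm := ring_nf) (u * ((d₀ 0 * d 0 + d₀ 1 * d 1 + d₀ 2 * d 2) * 0 + d₀ 1 * (d₀ 2 * d 0 - d₀ 0 * d 2)) * h₁' - u * ((d₀ 0 * d 0 + d₀ 1 * d 1 + d₀ 2 * d 2) * 0 + (d₀ 2 * d 0 - d₀ 0 * d 2) * d 1) * h₀' - ((d₀ 0 * d 0 + d₀ 1 * d 1 + d₀ 2 * d 2) * (0 - 0) + (d₀ 2 * d 0 - d₀ 0 * d 2) * d 1 - d₀ 1 * (d₀ 2 * d 0 - d₀ 0 * d 2)) * hu)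
  · linear_combination (norm := ring_nf) (u * ((d₀ 0 * d 0 + d₀ 1 * d 1 + d₀ 2 * d 2) * (-d₀ 0) + d₀ 1 * (d₀ 0 * d 1 - d₀ 1 * d 0)) * h₁' - u * ((d₀ 0 * d 0 + d₀ 1 * d 1 + d₀ 2 * d 2) * (-d 0) + (d₀ 2 * d 0 - d₀ 0 * d 2) * d 2) * h₀' - ((d₀ 0 * d 0 + d₀ 1 * d 1 + d₀ 2 * d 2) * ((-d 0) - (-d₀ 0)) + (d₀ 2 * d 0 - d₀ 0 * d 2) * d 2 - d₀ 1 * (d₀ 0 * d 1 - d₀ 1 * d 0)) * hu)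
  · linear_combination (norm := ring_nf) (u * ((d₀ 0 * d 0 + d₀ 1 * d 1 + d₀ 2 * d 2) * (-d₀ 1) + d₀ 2 * (d₀ 1 * d 2 - d₀ 2 * d 1)) * h₁' - u * ((d₀ 0 * d 0 + d₀ 1 * d 1 + d₀ 2 * d 2) * (-d 1) + (d₀ 0 * d 1 - d₀ 1 * d 0) * d 0) * h₀' - ((d₀ 0 * d 0 + d₀ 1 * d 1 + d₀ 2 * d 2) * ((-d 1) - (-d₀ 1)) + (d₀ 0 * d 1 - d₀ 1 * d 0) * d 0 - d₀ 2 * (d₀ 1 * d 2 - d₀ 2 * d 1)) * hu)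
  · linear_combination (norm := ring_nf) (u * ((d₀ 0 * d 0 + d₀ 1 * d 1 + d₀ 2 * d 2) * d₀ 0 + d₀ 2 * (d₀ 2 * d 0 - d₀ 0 * d 2)) * h₁' - u * ((d₀ 0 * d 0 + d₀ 1 * d 1 + d₀ 2 * d 2) * d 0 + (d₀ 0 * d 1 - d₀ 1 * d 0) * d 1) * h₀' - ((d₀ 0 * d 0 + d₀ 1 * d 1 + d₀ 2 * d 2) * (d 0 - d₀ 0) + (d₀ 0 * d 1 - d₀ 1 * d 0) * d 1 - d₀ 2 * (d₀ 2 * d 0 - d₀ 0 * d 2)) * hu)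
  · linear_combination (norm := ring_nf) (u * ((d₀ 0 * d 0 + d₀ 1 * d 1 + d₀ 2 * d 2) * 0 + d₀ 2 * (d₀ 0 * d 1 - d₀ 1 * d 0)) * h₁' - u * ((d₀ 0 * d 0 + d₀ 1 * d 1 + d₀ 2 * d 2) * 0 + (d₀ 0 * d 1 - d₀ 1 * d 0) * d 2) * h₀' - ((d₀ 0 * d 0 + d₀ 1 * d 1 + d₀ 2 * d 2) * (0 - 0) + (d₀ 0 * d 1 - d₀ 1 * d 0) * d 2 - d₀ 2 * (d₀ 0 * d 1 - d₀ 1 * d 0)) * hu)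

lemma semiconj_exp (A B C : Matrix (Fin 3) (Fin 3) ℝ) (hc : A * C = C * B) :
    NormedSpace.exp A * C = C * NormedSpace.exp B := by
  letI : SeminormedRing (Matrix (Fin 3) (Fin 3) ℝ) := Matrix.linftyOpSemiNormedRing
  letI : NormedRing (Matrix (Fin 3) (Fin 3) ℝ) := Matrix.linftyOpNormedRing
  letI : NormedAlgebra ℝ (Matrix (Fin 3) (Fin 3) ℝ) := Matrix.linftyOpNormedAlgebra
  have hsc : SemiconjBy C B A := by
    unfold SemiconjBy
    rw [hc]
  have hpow : ∀ n : ℕ, A ^ n * C = C * B ^ n := fun n => ((hsc.pow_right n).symm)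
  rw [NormedSpace.exp_eq_tsum (𝕂 := ℝ)]
  simp only []
  erw [← Summable.tsum_mul_right C (NormedSpace.expSeries_summable' (𝕂 := ℝ) A),
    ← Summable.tsum_mul_left C (NormedSpace.expSeries_summable' (𝕂 := ℝ) B)]
  congr 1
  funext n
  rw [smul_mul_assoc, mul_smul_comm, hpow n]

theorem exp_spin_chi_commutation (d₀ d : Fin 3 → ℝ) (h₀ : d₀ ⬝ᵥ d₀ = 1)
    (h₁ : d ⬝ᵥ d = 1) (h : d₀ ⬝ᵥ d ≠ -1) (ψ : ℝ) :
    NormedSpace.exp (ψ • skewM d) * chiR d₀ d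
      = chiR d₀ d * NormedSpace.exp (ψ • skewM d₀) := by
  apply semiconj_exp
  rw [smul_mul_assoc, mul_smul_comm, key d₀ d h₀ h₁ h]
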